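/- Let A, B be finite-dimensional commutative associative unital algebras over a field K. Then the space of derivations satisfies dim Der(A ⊗ B) = dim(Der(A)) · dim(B) + dim(A) · dim(Der(B)), via the isomorphism Der(A ⊗ B) ≅ (Der(A) ⊗ B) ⊕ (A ⊗ Der(B)). -/

import Mathlib

set_option maxHeartbeats 1000000

open TensorProduct

section Aux

variable {K : Type*} [Field K]

/-- The coercion of derivations to linear maps, as a linear map. -/
def derCoeLM (K A M : Type*) [Field K] [CommRing A] [Algebra K A]
    [AddCommGroup M] [Module K M] [Module A M] [IsScalarTower K A M] :
    Derivation K A M →ₗ[K] (A →ₗ[K] M) where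
  toFun D := D.toLinearMap
  map_add' _ _ := rfl
  map_smul' _ _ := rfl

instance derFD (K A M : Type*) [Field K] [CommRing A] [Algebra K A]
    [AddCommGroup M] [Module K M] [Module A M] [IsScalarTower K A M]
    [FiniteDimensional K A] [FiniteDimensional K M] :
    FiniteDimensional K (Derivation K A M) := by
  refine FiniteDimensional.of_injective (derCoeLM K A M) ?_
  intro D1 D2 h
  ext a
  exact DFunLike.congr_fun h a

variable {A : Type*} [CommRing A] [Algebra K A]

/-- Derivations into a power of `A` are tuples of derivations into `A`. -/
noncomputable def derPi (ι : Type*) [Fintype ι] :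
    Derivation K A (ι → A) ≃ₗ[K] (ι → Derivation K A A) where
  toFun D i := (LinearMap.proj i).compDer D
  invFun d :=
    { toLinearMap := LinearMap.pi fun i => ((d i : A →ₗ[K] A))
      map_one_eq_zero' := by funext i; simp
      leibniz' := fun a b => by
        funext i
        simp [LinearMap.pi_apply] }
  map_add' D1 D2 := by funext i; ext a; rfl
  map_smul' c D := by funext i; ext a; rfl
  left_inv D := by ext a; rfl
  right_inv d := by funext i; ext a; rfl

lemma finrank_der_baseChange (V : Type*) [AddCommGroup V] [Module K V]
    [FiniteDimensional K V] [FiniteDimensional K A] :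
    Module.finrank K (Derivation K A (A ⊗[K] V)) =
      Module.finrank K (Derivation K A A) * Module.finrank K V := by
  classical
  let b := Module.finBasis K V
  let e : (A ⊗[K] V) ≃ₗ[A] (Fin (Module.finrank K V) → A) :=
    (Algebra.TensorProduct.basis A b).equivFun
  rw [((e.compDer (R := K)).restrictScalars K |>.trans (derPi (Fin (Module.finrank K V)))).finrank_eq,
    Module.finrank_pi_fintype]
  simp [mul_comm]

end Aux

section Main

variable {K : Type*} [Field K]
variable {A B : Type*} [CommRing A] [CommRing B] [Algebra K A] [Algebra K B]

lemma lsmulA (a : A) (m : A ⊗[K] B) : a • m = (a ⊗ₜ[K] (1 : B)) * m := by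
  induction m using TensorProduct.induction_on with
  | zero => simp
  | tmul x y => simp [smul_tmul', Algebra.TensorProduct.tmul_mul_tmul]
  | add x y hx hy => simp [smul_add, mul_add, hx, hy]

lemma keyL (a a' : A) : ((a * a') ⊗ₜ[K] (1 : B) : A ⊗[K] B)
    = (a ⊗ₜ[K] (1 : B)) * (a' ⊗ₜ[K] (1 : B)) := by
  simp [Algebra.TensorProduct.tmul_mul_tmul]

lemma keyR (b b' : B) : ((1 : A) ⊗ₜ[K] (b * b') : A ⊗[K] B)
    = ((1 : A) ⊗ₜ[K] b) * ((1 : A) ⊗ₜ[K] b') := by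
  simp [Algebra.TensorProduct.tmul_mul_tmul]

lemma keyT (a : A) (b : B) : (a ⊗ₜ[K] b : A ⊗[K] B)
    = (a ⊗ₜ[K] (1 : B)) * ((1 : A) ⊗ₜ[K] b) := by
  simp [Algebra.TensorProduct.tmul_mul_tmul]

lemma comm_comm (x : A ⊗[K] B) :
    (Algebra.TensorProduct.comm K B A) ((Algebra.TensorProduct.comm K A B) x) = x := by
  induction x using TensorProduct.induction_on with
  | zero => simp
  | tmul a b => rfl
  | add x y hx hy => simp [map_add, hx, hy]

/-- The right component of a derivation of `A ⊗ B`, as a derivation of `B`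
with values in `B ⊗ A` (a `B`-module). -/
noncomputable def derRight (D : Derivation K (A ⊗[K] B) (A ⊗[K] B)) :
    Derivation K B (B ⊗[K] A) where
  toLinearMap := (Algebra.TensorProduct.comm K A B).toLinearMap ∘ₗ
    D.toLinearMap ∘ₗ (Algebra.TensorProduct.includeRight : B →ₐ[K] A ⊗[K] B).toLinearMap
  map_one_eq_zero' := by
    simp only [LinearMap.comp_apply, AlgHom.toLinearMap_apply,
      Algebra.TensorProduct.includeRight_apply, AlgEquiv.toLinearMap_apply,
      Derivation.coeFn_coe]
    rw [← Algebra.TensorProduct.one_def, Derivation.map_one_eq_zero, map_zero]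
  leibniz' b b' := by
    simp only [LinearMap.comp_apply, AlgHom.toLinearMap_apply,
      Algebra.TensorProduct.includeRight_apply, AlgEquiv.toLinearMap_apply,
      Derivation.coeFn_coe]
    rw [keyR, D.leibniz, smul_eq_mul, smul_eq_mul, map_add, map_mul, map_mul,
      Algebra.TensorProduct.comm_tmul, Algebra.TensorProduct.comm_tmul,
      lsmulA (K := K) (A := B) (B := A) b, lsmulA (K := K) (A := B) (B := A) b']

lemma derRight_apply (D : Derivation K (A ⊗[K] B) (A ⊗[K] B)) (b : B) :
    derRight D b = (Algebra.TensorProduct.comm K A B) (D ((1 : A) ⊗ₜ[K] b)) := rfl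

variable (K A B) in
/-- The glued linear map from a pair of derivations. -/
noncomputable def glueLM
    (p : Derivation K A (A ⊗[K] B) × Derivation K B (B ⊗[K] A)) :
    A ⊗[K] B →ₗ[K] A ⊗[K] B :=
  TensorProduct.lift (LinearMap.mk₂ K
    (fun a b => ((1 : A) ⊗ₜ[K] b) * p.1 a
      + (a ⊗ₜ[K] (1 : B)) * ((Algebra.TensorProduct.comm K B A) (p.2 b)))
    (fun a a' b => by
      simp only [map_add, mul_add, add_tmul, add_mul]
      ring)
    (fun k a b => by
      simp only [Derivation.map_smul, ← smul_tmul', smul_mul_assoc, mul_smul_comm, smul_add])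
    (fun a b b' => by
      simp only [map_add, mul_add, tmul_add, add_mul]
      ring)
    (fun k a b => by
      simp only [Derivation.map_smul, map_smul, tmul_smul, mul_smul_comm,
        smul_mul_assoc, smul_add]))

lemma glueLM_tmul (p : Derivation K A (A ⊗[K] B) × Derivation K B (B ⊗[K] A))
    (a : A) (b : B) :
    glueLM K A B p (a ⊗ₜ[K] b) = ((1 : A) ⊗ₜ[K] b) * p.1 a
      + (a ⊗ₜ[K] (1 : B)) * ((Algebra.TensorProduct.comm K B A) (p.2 b)) := rfl

lemma glueLM_leibniz (p : Derivation K A (A ⊗[K] B) × Derivation K B (B ⊗[K] A))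
    (x y : A ⊗[K] B) :
    glueLM K A B p (x * y) = x * glueLM K A B p y + y * glueLM K A B p x := by
  induction x using TensorProduct.induction_on with
  | zero => simp
  | add x₁ x₂ h₁ h₂ => rw [add_mul, map_add, map_add, h₁, h₂]; ring
  | tmul a b =>
    induction y using TensorProduct.induction_on with
    | zero => simp
    | add y₁ y₂ h₁ h₂ => rw [mul_add, map_add, map_add, h₁, h₂]; ring
    | tmul a' b' =>
      rw [Algebra.TensorProduct.tmul_mul_tmul, glueLM_tmul, glueLM_tmul, glueLM_tmul,
        p.1.leibniz, p.2.leibniz,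
        lsmulA (K := K) (A := A) (B := B) a, lsmulA (K := K) (A := A) (B := B) a',
        lsmulA (K := K) (A := B) (B := A) b, lsmulA (K := K) (A := B) (B := A) b',
        map_add, map_mul, map_mul,
        Algebra.TensorProduct.comm_tmul, Algebra.TensorProduct.comm_tmul,
        keyL, keyR, keyT a b, keyT a' b']
      ring

/-- Glue a pair of derivations into a derivation of `A ⊗ B`. -/
noncomputable def derGlue
    (p : Derivation K A (A ⊗[K] B) × Derivation K B (B ⊗[K] A)) :
    Derivation K (A ⊗[K] B) (A ⊗[K] B) where
  toLinearMap := glueLM K A B p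
  map_one_eq_zero' := by
    rw [Algebra.TensorProduct.one_def]
    show glueLM K A B p _ = 0
    rw [glueLM_tmul]
    simp
  leibniz' x y := by
    simp only [smul_eq_mul]
    exact glueLM_leibniz p x y

lemma derGlue_apply (p : Derivation K A (A ⊗[K] B) × Derivation K B (B ⊗[K] A))
    (x : A ⊗[K] B) : derGlue p x = glueLM K A B p x := rfl

/-- The splitting of derivations of `A ⊗ B`. -/
noncomputable def derSplit :
    Derivation K (A ⊗[K] B) (A ⊗[K] B) ≃ₗ[K]
      Derivation K A (A ⊗[K] B) × Derivation K B (B ⊗[K] A) where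
  toFun D := (D.compAlgebraMap A, derRight D)
  invFun := derGlue
  map_add' D1 D2 := by
    refine Prod.ext ?_ ?_
    · ext a; rfl
    · ext b
      show derRight (D1 + D2) b = derRight D1 b + derRight D2 b
      simp only [derRight_apply, Derivation.add_apply, map_add]
  map_smul' c D := by
    refine Prod.ext ?_ ?_
    · ext a; rfl
    · ext b
      show derRight (c • D) b = (c • derRight D) b
      simp only [derRight_apply, Derivation.smul_apply, map_smul]
  left_inv D := by
    ext x
    show glueLM K A B (D.compAlgebraMap A, derRight D) x = D x
    induction x using TensorProduct.induction_on with
    | zero => simp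
    | add x y hx hy => rw [map_add, D.map_add, hx, hy]
    | tmul a b =>
      rw [glueLM_tmul]
      simp only [Derivation.compAlgebraMap_apply, derRight_apply, _root_.comm_comm]
      have halg : (algebraMap A (A ⊗[K] B)) a = a ⊗ₜ[K] (1 : B) := rfl
      rw [halg, keyT a b, D.leibniz, smul_eq_mul, smul_eq_mul]
      ring
  right_inv p := by
    refine Prod.ext ?_ ?_
    · ext a
      show glueLM K A B p ((algebraMap A (A ⊗[K] B)) a) = p.1 a
      have halg : (algebraMap A (A ⊗[K] B)) a = a ⊗ₜ[K] (1 : B) := rfl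
      rw [halg, glueLM_tmul]
      simp [_root_.comm_comm, ← Algebra.TensorProduct.one_def]
    · ext b
      show Algebra.TensorProduct.comm K A B (glueLM K A B p ((1 : A) ⊗ₜ[K] b)) = p.2 b
      rw [glueLM_tmul]
      simp only [Derivation.map_one_eq_zero, mul_zero, zero_add, map_add, map_mul]
      rw [← Algebra.TensorProduct.one_def]
      simp [comm_comm (K := K) (A := B) (B := A)]

end Main

theorem stmt_17 (K : Type*) [Field K]
    (A B : Type*) [CommRing A] [CommRing B] [Algebra K A] [Algebra K B]
    [FiniteDimensional K A] [FiniteDimensional K B] :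
    Nonempty (Derivation K (A ⊗[K] B) (A ⊗[K] B) ≃ₗ[K]
        ((Derivation K A A) ⊗[K] B) × (A ⊗[K] (Derivation K B B))) ∧
    Module.finrank K (Derivation K (A ⊗[K] B) (A ⊗[K] B)) =
      Module.finrank K (Derivation K A A) * Module.finrank K B +
        Module.finrank K A * Module.finrank K (Derivation K B B) := by
  have hsplit := (derSplit (K := K) (A := A) (B := B)).finrank_eq
  have h1 := finrank_der_baseChange (K := K) (A := A) (V := B)
  have h2 := finrank_der_baseChange (K := K) (A := B) (V := A)
  have hrank : Module.finrank K (Derivation K (A ⊗[K] B) (A ⊗[K] B)) =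
      Module.finrank K (Derivation K A A) * Module.finrank K B +
        Module.finrank K A * Module.finrank K (Derivation K B B) := by
    rw [hsplit, Module.finrank_prod, h1, h2]
    ring
  refine ⟨⟨LinearEquiv.ofFinrankEq _ _ ?_⟩, hrank⟩
  rw [hrank, Module.finrank_prod, Module.finrank_tensorProduct,
    Module.finrank_tensorProduct]
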